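/- Let (X,d) be a metric space with |X| ≥ 3, T : X → X a generalized Kannan type mapping with λ ∈ [0, 2/3), and suppose the iterates xₙ (x₀ ∈ X, xₙ₊₁ = Txₙ) are pairwise distinct and converge to a point x* ∈ X. Then x* is a fixed point of T, and moreover d(x*, Tx*) ≤ (1/(1−λ))·(d(x*, xₙ) + λ(d(xₙ₋₁, xₙ) + d(xₙ, xₙ₊₁))) for all n ≥ 1 with xₙ, xₙ₋₁ ≠ x*. -/
import Mathlib


theorem stmt_15 {X : Type*} [MetricSpace X] (h3 : 3 ≤ Cardinal.mk X) (T : X → X)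
    (l : ℝ) (hl0 : 0 ≤ l) (hl : l < 2/3)
    (hGK : ∀ x y z : X, x ≠ y → y ≠ z → x ≠ z →
      dist (T x) (T y) + dist (T y) (T z) + dist (T x) (T z) ≤
        l * (dist x (T x) + dist y (T y) + dist z (T z)))
    (x : ℕ → X) (hiter : ∀ n, x (n + 1) = T (x n))
    (hinj : Function.Injective x)
    (xs : X) (hlim : Filter.Tendsto x Filter.atTop (nhds xs)) :
    T xs = xs ∧
    ∀ n : ℕ, x n ≠ xs → x (n+1) ≠ xs →
      dist xs (T xs) ≤
        (1/(1-l)) * (dist xs (x (n+1)) +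
          l * (dist (x n) (x (n+1)) + dist (x (n+1)) (x (n+2)))) := by
  have h1l : 0 < 1 - l := by linarith
  have key : ∀ n : ℕ, x n ≠ xs → x (n+1) ≠ xs →
      dist xs (T xs) ≤ (1/(1-l)) * (dist xs (x (n+1)) +
        l * (dist (x n) (x (n+1)) + dist (x (n+1)) (x (n+2)))) := by
    intro n h1 h2
    have hne : x n ≠ x (n+1) := fun h => by simpa using hinj h
    have hGK' := hGK (x n) (x (n+1)) xs hne h2 h1
    rw [← hiter n, ← hiter (n+1)] at hGK'
    have tri := dist_triangle xs (x (n+1)) (T xs)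
    have hd1 : (0:ℝ) ≤ dist (x (n+1)) (x (n+2)) := dist_nonneg
    have hd2 : (0:ℝ) ≤ dist (x (n+2)) (T xs) := dist_nonneg
    have hd3 : (0:ℝ) ≤ dist (x (n+1)) (T xs) := dist_nonneg
    have hsym : dist (x (n+1)) (T xs) = dist (T (x n)) (T xs) := by rw [← hiter n]
    rw [one_div, ← div_eq_inv_mul, le_div_iff₀ h1l]
    nlinarith [hGK', tri]
  have hlim1 : Filter.Tendsto (fun n => x (n+1)) Filter.atTop (nhds xs) :=
    hlim.comp (Filter.tendsto_add_atTop_nat 1)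
  have hlim2 : Filter.Tendsto (fun n => x (n+2)) Filter.atTop (nhds xs) :=
    hlim.comp (Filter.tendsto_add_atTop_nat 2)
  have hf : Filter.Tendsto (fun n => (1/(1-l)) * (dist xs (x (n+1)) +
      l * (dist (x n) (x (n+1)) + dist (x (n+1)) (x (n+2))))) Filter.atTop (nhds 0) := by
    have := ((Filter.Tendsto.dist (tendsto_const_nhds (x := xs)) hlim1).add
      (((hlim.dist hlim1).add (hlim1.dist hlim2)).const_mul l)).const_mul (1/(1-l))
    simpa using this
  have hev : ∀ᶠ n in Filter.atTop, x n ≠ xs ∧ x (n+1) ≠ xs := by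
    by_cases h : ∃ m, x m = xs
    · obtain ⟨m, hm⟩ := h
      refine Filter.eventually_atTop.2 ⟨m+1, fun n hn => ⟨?_, ?_⟩⟩
      · intro h'; have := hinj (h'.trans hm.symm); omega
      · intro h'; have := hinj (h'.trans hm.symm); omega
    · push_neg at h
      exact Filter.Eventually.of_forall fun n => ⟨h n, h (n+1)⟩
  have hle : dist xs (T xs) ≤ 0 :=
    ge_of_tendsto hf (hev.mono fun n hn => key n hn.1 hn.2)
  have h0 : dist xs (T xs) = 0 := le_antisymm hle dist_nonneg
  exact ⟨(dist_eq_zero.1 h0).symm, key⟩
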